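/- Let φ be an endomorphism of a finite abelian group G, and let P = {g ∈ G : φ^n(g) = g for some n ≥ 1} be the set of periodic elements of φ; φ restricts to a permutation of P. Then for every complex z with |z| < 1, exp(Σ_{n≥1} (R(φ^n)/n) z^n) = ∏_{[γ]} (1 − z^{#[γ]})^{−1}, where the product is taken over all φ-orbits [γ] of periodic elements of G and #[γ] denotes the cardinality of the orbit. -/

import Mathlib

/-- The set of Reidemeister (`φ`-twisted conjugacy) classes of an endomorphism `φ` of a
group `G`: `α'` is `φ`-conjugate to `α` iff `α' = γ * α * (φ γ)⁻¹` for some `γ ∈ G`. -/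
def ReidemeisterSet {G : Type*} [Group G] (φ : Monoid.End G) : Type _ :=
  Quot (fun a b : G => ∃ γ : G, b = γ * a * (φ γ)⁻¹)

open Function

lemma end_pow_coe {G : Type*} [Monoid G] (φ : Monoid.End G) (n : ℕ) :
    ⇑(φ ^ n) = (⇑φ)^[n] := hom_coe_pow _ rfl (fun _ _ => rfl) φ n

lemma reidemeister_card {G : Type*} [CommGroup G] [Fintype G] (ψ : Monoid.End G) :
    Nat.card (ReidemeisterSet ψ) = Nat.card {g : G // ψ g = g} := by
  classical
  set θ : G →* G :=
    { toFun := fun g => g * (ψ g)⁻¹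
      map_one' := by simp
      map_mul' := by
        intro a b
        simp [mul_inv, mul_comm, mul_left_comm, mul_assoc] } with hθ
  have hrel : ∀ a b : G, (∃ γ : G, b = γ * a * (ψ γ)⁻¹) ↔
      (QuotientGroup.leftRel θ.range) a b := by
    intro a b
    rw [QuotientGroup.leftRel_apply]
    constructor
    · rintro ⟨γ, rfl⟩
      refine ⟨γ, ?_⟩
      show γ * (ψ γ)⁻¹ = a⁻¹ * (γ * a * (ψ γ)⁻¹)
      rw [mul_comm γ a, mul_assoc a, inv_mul_cancel_left]
    · rintro ⟨γ, hγ⟩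
      refine ⟨γ, ?_⟩
      have h2 : a⁻¹ * b = γ * (ψ γ)⁻¹ := hγ.symm
      rw [mul_comm γ a, mul_assoc a, ← h2, mul_inv_cancel_left]
  have e1 : ReidemeisterSet ψ ≃ (G ⧸ θ.range) := Quot.congrRight hrel
  have hker : Nat.card {g : G // ψ g = g} = Nat.card θ.ker := by
    refine Nat.card_congr (Equiv.subtypeEquivRight fun g => ?_)
    simp only [hθ, MonoidHom.mem_ker, MonoidHom.coe_mk, OneHom.coe_mk, mul_inv_eq_one]
    exact eq_comm
  have h1 : Nat.card G = Nat.card (G ⧸ θ.range) * Nat.card θ.range :=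
    Subgroup.card_eq_card_quotient_mul_card_subgroup _
  have h2 : Nat.card G = Nat.card (G ⧸ θ.ker) * Nat.card θ.ker :=
    Subgroup.card_eq_card_quotient_mul_card_subgroup _
  have h3 : Nat.card (G ⧸ θ.ker) = Nat.card θ.range :=
    Nat.card_congr (QuotientGroup.quotientKerEquivRange θ).toEquiv
  have hpos : 0 < Nat.card θ.range := Nat.card_pos
  rw [Nat.card_congr e1, hker]
  have : Nat.card (G ⧸ θ.range) * Nat.card θ.range = Nat.card θ.range * Nat.card θ.ker := by
    rw [← h1, h2, h3]
  exact Nat.eq_of_mul_eq_mul_right hpos (by rw [this, mul_comm])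

lemma orbit_card' {α : Type*} [Fintype α] [DecidableEq α] (f : α → α) (γ : α)
    (hγ : γ ∈ periodicPts f) :
    Nat.card {g // ∃ n : ℕ, f^[n] γ = g} = minimalPeriod f γ := by
  classical
  set d := minimalPeriod f γ with hd
  have hdpos : 0 < d := minimalPeriod_pos_of_mem_periodicPts hγ
  set l : List α := (List.range d).map fun n => f^[n] γ with hl
  have h1 : ∀ g, (∃ n : ℕ, f^[n] γ = g) ↔ g ∈ l.toFinset := by
    intro g
    rw [List.mem_toFinset, hl, List.mem_map]
    constructor
    · rintro ⟨n, rfl⟩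
      exact ⟨n % d, List.mem_range.2 (Nat.mod_lt _ hdpos), iterate_mod_minimalPeriod_eq⟩
    · rintro ⟨n, _, rfl⟩
      exact ⟨n, rfl⟩
  rw [Nat.card_congr (Equiv.subtypeEquivRight h1), Nat.card_eq_fintype_card, Fintype.card_coe]
  have hnd : l.Nodup := by
    have := nodup_periodicOrbit (f := f) (x := γ)
    rwa [periodicOrbit_def, Cycle.nodup_coe_iff] at this
  rw [List.toFinset_card_of_nodup hnd, hl, List.length_map, List.length_range]

lemma fix_iff' {α : Type*} (f : α → α) {γ : α} (hγ : γ ∈ periodicPts f) (k n : ℕ) :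
    f^[n] (f^[k] γ) = f^[k] γ ↔ minimalPeriod f γ ∣ n := by
  rw [show (f^[n] (f^[k] γ) = f^[k] γ) ↔ IsPeriodicPt f n (f^[k] γ) from Iff.rfl,
    isPeriodicPt_iff_minimalPeriod_dvd, minimalPeriod_apply_iterate hγ]

lemma fix_count {G : Type*} [Fintype G] [DecidableEq G] (f : G → G) (S : Finset G)
    (hSper : ∀ γ ∈ S, γ ∈ periodicPts f)
    (hSrep : ∀ g, g ∈ periodicPts f → ∃! γ : G, γ ∈ S ∧ ∃ n : ℕ, f^[n] γ = g)
    (m : ℕ) (hm : 1 ≤ m) :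
    (Finset.univ.filter fun g => f^[m] g = g).card
      = ∑ γ ∈ S, if minimalPeriod f γ ∣ m then minimalPeriod f γ else 0 := by
  classical
  set O : G → Finset G := fun γ => Finset.univ.filter (fun g => ∃ n : ℕ, f^[n] γ = g) with hO
  have hOmem : ∀ γ g, g ∈ O γ ↔ ∃ n : ℕ, f^[n] γ = g := by
    intro γ g; simp [hO]
  have hOcard : ∀ γ ∈ S, (O γ).card = minimalPeriod f γ := by
    intro γ hγ
    rw [← orbit_card' f γ (hSper γ hγ), Nat.card_eq_fintype_card, Fintype.card_subtype]
  have hper : ∀ γ, γ ∈ periodicPts f → ∀ g ∈ O γ, g ∈ periodicPts f := by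
    intro γ hγ g hg
    obtain ⟨k, rfl⟩ := (hOmem γ g).1 hg
    exact ⟨minimalPeriod f γ, minimalPeriod_pos_of_mem_periodicPts hγ,
      (fix_iff' f hγ k _).2 dvd_rfl⟩
  have hdisj : ∀ x ∈ S.filter (fun γ => minimalPeriod f γ ∣ m),
      ∀ y ∈ S.filter (fun γ => minimalPeriod f γ ∣ m), x ≠ y → Disjoint (O x) (O y) := by
    intro x hx y hy hxy
    rw [Finset.disjoint_left]
    intro g hgx hgy
    obtain ⟨c, -, hu⟩ := hSrep g (hper x (hSper x (Finset.mem_filter.1 hx).1) g hgx)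
    exact hxy ((hu x ⟨(Finset.mem_filter.1 hx).1, (hOmem x g).1 hgx⟩).trans
      (hu y ⟨(Finset.mem_filter.1 hy).1, (hOmem y g).1 hgy⟩).symm)
  have hpart : Finset.univ.filter (fun g => f^[m] g = g)
      = (S.filter fun γ => minimalPeriod f γ ∣ m).biUnion O := by
    ext g
    simp only [Finset.mem_filter, Finset.mem_biUnion, Finset.mem_univ, true_and]
    constructor
    · intro hg
      obtain ⟨γ, ⟨hγS, k, hk⟩, -⟩ := hSrep g ⟨m, hm, hg⟩
      refine ⟨γ, ⟨hγS, ?_⟩, (hOmem γ g).2 ⟨k, hk⟩⟩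
      rw [← hk] at hg
      exact (fix_iff' f (hSper γ hγS) k m).1 hg
    · rintro ⟨γ, ⟨hγS, hdvd⟩, hgO⟩
      obtain ⟨k, rfl⟩ := (hOmem γ g).1 hgO
      exact (fix_iff' f (hSper γ hγS) k m).2 hdvd
  rw [hpart, Finset.card_biUnion hdisj,
    Finset.sum_congr rfl fun γ hγ => hOcard γ (Finset.mem_filter.1 hγ).1]
  exact Finset.sum_filter _ _

lemma hasSum_orbit_log {d : ℕ} (hd : 1 ≤ d) {z : ℂ} (hz : ‖z‖ < 1) :
    HasSum (fun n : ℕ => (if d ∣ n + 1 then (d : ℂ) else 0) / ((n : ℂ) + 1) * z ^ (n + 1))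
      (-Complex.log (1 - z ^ d)) := by
  have hd0 : (d : ℂ) ≠ 0 := Nat.cast_ne_zero.2 (by omega)
  have hw : ‖z ^ d‖ < 1 := by
    rw [norm_pow]
    exact pow_lt_one₀ (norm_nonneg z) hz (by omega)
  have h0 := Complex.hasSum_taylorSeries_neg_log hw
  have h1 : HasSum (fun k : ℕ => (z ^ d) ^ (k + 1) / ((k : ℂ) + 1))
      (-Complex.log (1 - z ^ d)) := by
    have := (hasSum_nat_add_iff (f := fun n : ℕ => (z ^ d) ^ n / (n : ℂ)) 1).2
      (by simpa using h0)
    convert this using 2 with k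
    · rfl
    push_cast
    rfl
  set i : ℕ → ℕ := fun k => d * k + (d - 1) with hi
  have hik : ∀ k, i k + 1 = d * (k + 1) := by
    intro k; simp only [hi, Nat.mul_succ]; omega
  have hinj : Function.Injective i := by
    intro a b hab
    simp only [hi] at hab
    have h := Nat.add_right_cancel hab
    exact Nat.eq_of_mul_eq_mul_left (show 0 < d by omega) h
  have hvan : ∀ n, n ∉ Set.range i →
      (if d ∣ n + 1 then (d : ℂ) else 0) / ((n : ℂ) + 1) * z ^ (n + 1) = 0 := by
    intro n hn
    have : ¬ d ∣ n + 1 := by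
      rintro ⟨m, hm⟩
      rcases m with _ | m'
      · simp at hm
      · exact hn ⟨m', by simp only [hi, Nat.mul_succ] at hm ⊢; omega⟩
    rw [if_neg this, zero_div, zero_mul]
  refine (Function.Injective.hasSum_iff hinj hvan).1 ?_
  convert h1 using 1
  funext k
  have h2 := hik k
  have h3 : ((i k : ℕ) : ℂ) + 1 = ((d : ℂ)) * ((k : ℂ) + 1) := by
    have := congrArg (fun m : ℕ => (m : ℂ)) h2
    push_cast at this
    linear_combination this
  have hk0 : ((k : ℂ) + 1) ≠ 0 := Nat.cast_add_one_ne_zero k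
  have hdvd : d ∣ i k + 1 := ⟨k + 1, h2⟩
  simp only [Function.comp_apply, h2, if_pos hdvd, dvd_mul_right, ↓reduceIte, h3, pow_mul]
  field_simp

/-- Let `φ` be an endomorphism of a finite abelian group `G` and let `S` be a
set of representatives of the `φ`-orbits of periodic elements of `φ`. Then for `|z| < 1`,
`exp(Σ_{n≥1} R(φⁿ)/n · zⁿ) = ∏_{[γ]} (1 − z^{#[γ]})⁻¹`, the product being over all `φ`-orbits
of periodic elements. -/
theorem reidemeister_zeta_of_finite_abelian (G : Type*) [CommGroup G] [Fintype G]
    (φ : Monoid.End G) (S : Finset G)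
    (hSper : ∀ γ ∈ S, ∃ n : ℕ, 1 ≤ n ∧ (φ ^ n) γ = γ)
    (hSrep : ∀ g : G, (∃ n : ℕ, 1 ≤ n ∧ (φ ^ n) g = g) →
      ∃! γ : G, γ ∈ S ∧ ∃ n : ℕ, (φ ^ n) γ = g)
    (z : ℂ) (hz : ‖z‖ < 1) :
    Complex.exp (∑' n : ℕ,
        (Nat.card (ReidemeisterSet (φ ^ (n + 1))) : ℂ) / ((n : ℂ) + 1) * z ^ (n + 1)) =
      ∏ γ ∈ S, (1 - z ^ Nat.card {g : G // ∃ n : ℕ, (φ ^ n) γ = g})⁻¹ := by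
  classical
  set f : G → G := ⇑φ with hf
  set d : G → ℕ := fun γ => minimalPeriod f γ with hdd
  have hS : ∀ γ ∈ S, γ ∈ periodicPts f := by
    intro γ hγ
    obtain ⟨n, hn1, hn⟩ := hSper γ hγ
    exact ⟨n, hn1, show (⇑φ)^[n] γ = γ by rw [← end_pow_coe]; exact hn⟩
  have hdpos : ∀ γ ∈ S, 1 ≤ d γ := fun γ hγ =>
    minimalPeriod_pos_of_mem_periodicPts (hS γ hγ)
  have hrep' : ∀ g, g ∈ periodicPts f → ∃! γ : G, γ ∈ S ∧ ∃ n : ℕ, f^[n] γ = g := by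
    intro g hg
    obtain ⟨n, hn1, hn⟩ := hg
    obtain ⟨γ, ⟨hγS, m, hm⟩, hu⟩ := hSrep g ⟨n, hn1, by rw [end_pow_coe]; exact hn⟩
    refine ⟨γ, ⟨hγS, m, by rw [← end_pow_coe]; exact hm⟩, ?_⟩
    rintro γ' ⟨hγ'S, m', hm'⟩
    exact hu γ' ⟨hγ'S, m', by rw [end_pow_coe]; exact hm'⟩
  have Rcard : ∀ n : ℕ, (Nat.card (ReidemeisterSet (φ ^ (n + 1))) : ℂ)
      = ∑ γ ∈ S, (if d γ ∣ n + 1 then (d γ : ℂ) else 0) := by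
    intro n
    rw [reidemeister_card (φ ^ (n + 1))]
    have e1 : Nat.card {g : G // (φ ^ (n + 1)) g = g}
        = (Finset.univ.filter fun g : G => f^[n + 1] g = g).card := by
      rw [Nat.card_eq_fintype_card, Fintype.card_subtype]
      congr 1
    rw [e1, fix_count f S hS hrep' (n + 1) (by omega)]
    push_cast [apply_ite (Nat.cast : ℕ → ℂ)]
    rfl
  have hterm : ∀ γ ∈ S, HasSum
      (fun n : ℕ => (if d γ ∣ n + 1 then (d γ : ℂ) else 0) / ((n : ℂ) + 1) * z ^ (n + 1))
      (-Complex.log (1 - z ^ d γ)) := fun γ hγ => hasSum_orbit_log (hdpos γ hγ) hz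
  have hsum : HasSum
      (fun n : ℕ => (Nat.card (ReidemeisterSet (φ ^ (n + 1))) : ℂ) / ((n : ℂ) + 1) * z ^ (n + 1))
      (∑ γ ∈ S, -Complex.log (1 - z ^ d γ)) := by
    have h := hasSum_sum hterm
    convert h using 1
    funext n
    rw [Rcard n, Finset.sum_div, Finset.sum_mul]
  rw [hsum.tsum_eq, Complex.exp_sum]
  have hne : ∀ γ ∈ S, 1 - z ^ d γ ≠ 0 := by
    intro γ hγ
    have : ‖z ^ d γ‖ < 1 := by
      rw [norm_pow]
      exact pow_lt_one₀ (norm_nonneg z) hz (by have := hdpos γ hγ; omega)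
    intro h
    rw [sub_eq_zero] at h
    rw [← h] at this
    simp at this
  refine Finset.prod_congr rfl fun γ hγ => ?_
  rw [Complex.exp_neg, Complex.exp_log (hne γ hγ)]
  congr 2
  have : Nat.card {g : G // ∃ n : ℕ, (φ ^ n) γ = g} = Nat.card {g : G // ∃ n : ℕ, f^[n] γ = g} :=
    Nat.card_congr (Equiv.subtypeEquivRight fun g => by simp [end_pow_coe, hf])
  rw [this, orbit_card' f γ (hS γ hγ)]
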